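/- arXiv:0905.4813 — 2 statements merged into one kernel-verified Lean document; each statement's English description precedes it below -/
import Mathlib

section
/- Lazy composition ⊗ : P_B C × P_A B → P_A C, defined by p ⊗ q = unfold χ (out p, out q), satisfies (identifying P with its unfolding via out): Ret(c, p_bc) ⊗ t_ab = Ret (c, p_bc ⊗ t_ab); (Rd φ) ⊗ Ret (b, p_ab) = φ b ⊗ p_ab; (Rd φ) ⊗ (Rd ψ) = Rd (λa. (Rd φ) ⊗ ψ a). -/
universe u

/-- The initial algebra `T_A B = μX. B + X^A`: wellfounded trees branching over `A`
with leaves labelled in `B`. -/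
inductive T (A : Type u) (B : Type u) : Type u
  | Ret : B → T A B
  | Rd : (A → T A B) → T A B

namespace StreamProc

/-- `eat (Ret b) α = (b, α)`, `eat (Rd φ) (a ∷ α) = eat (φ a) α`. -/
def eat {A B : Type u} : T A B → Stream' A → B × Stream' A
  | .Ret b, α => (b, α)
  | .Rd φ, α => eat (φ α.head) α.tail

/-- `β` and `α` agree on their first `n` entries. -/
def Agree {A : Type u} (n : ℕ) (α β : Stream' A) : Prop :=
  ∀ i < n, α.get i = β.get i

/-- continuity of a discrete-valued function on streams (product topology of
the discrete topology, expressed concretely via prefixes). -/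
def ContD {A B : Type u} (f : Stream' A → B) : Prop :=
  ∀ α, ∃ n, ∀ β, Agree n α β → f β = f α

/-- continuity of a stream-valued function on streams. -/
def ContS {A B : Type u} (f : Stream' A → Stream' B) : Prop :=
  ∀ α n, ∃ m, ∀ β, Agree m α β → Agree n (f α) (f β)

/-- structural recursion (fold) on `T A B`. -/
def tfold {A B C : Type u} (r : B → C) (g : (A → C) → C) : T A B → C
  | .Ret b => r b
  | .Rd φ => g fun a => tfold r g (φ a)

/-- bind of the free (tree) monad `T_A`: grafting at leaves. -/
def tbind {A B C : Type u} : T A B → (B → T A C) → T A C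
  | .Ret b, f => f b
  | .Rd φ, f => .Rd fun a => tbind (φ a) f

/-- bind of the state monad `M_A B = A^ω → B × A^ω`. -/
def mbind {A B C : Type u} (m : Stream' A → B × Stream' A)
    (f : B → Stream' A → C × Stream' A) : Stream' A → C × Stream' A :=
  fun α => f (m α).1 (m α).2

/-- the type of leaf positions of a tree. -/
def LeafPos {A B : Type u} : T A B → Type u
  | .Ret _ => PUnit
  | .Rd φ => Σ a, LeafPos (φ a)

/-- the polynomial functor whose extension is `X ↦ T A (B × X)`. -/
def PF (A B : Type u) : PFunctor.{u} := ⟨T A B, LeafPos⟩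

/-- `P_A B = νX. T_A (B × X)`, realised as an M-type. -/
def P (A B : Type u) : Type u := (PF A B).M

/-- repack a shape and leaf-labelling as a tree with decorated leaves. -/
def decorate {A B X : Type u} : (t : T A B) → (LeafPos t → X) → T A (B × X)
  | .Ret b, f => .Ret (b, f PUnit.unit)
  | .Rd φ, f => .Rd fun a => decorate (φ a) fun l => f ⟨a, l⟩

/-- split a leaf-decorated tree into a shape and a leaf-labelling. -/
def splitT {A B X : Type u} : T A (B × X) → Σ t : T A B, LeafPos t → X
  | .Ret bx => ⟨.Ret bx.1, fun _ => bx.2⟩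
  | .Rd φ => ⟨.Rd fun a => (splitT (φ a)).1, fun l => (splitT (φ l.1)).2 l.2⟩

/-- the structure map `out : P_A B → T_A (B × P_A B)` of the final coalgebra. -/
def Pout {A B : Type u} (p : P A B) : T A (B × P A B) :=
  decorate (PFunctor.M.dest p).1 (PFunctor.M.dest p).2

/-- corecursion (unfold) into the final coalgebra `P_A B`. -/
def Punfold {A B X : Type u} (c : X → T A (B × X)) : X → P A B :=
  PFunctor.M.corec fun x => splitT (c x)

/-- `eat∞ : P_A B → A^ω → B^ω`: if `eat (out p) α = ((b, p'), α')` then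
`eat∞ p α = b ∷ eat∞ p' α'`. -/
def eatInf {A B : Type u} (p : P A B) (α : Stream' A) : Stream' B :=
  Stream'.corec (fun s : P A B × Stream' A => (eat (Pout s.1) s.2).1.1)
    (fun s => ((eat (Pout s.1) s.2).1.2, (eat (Pout s.1) s.2).2)) (p, α)

/-- the `fast-forward` map `ρ`. -/
def rho {A B C : Type u} : T A B → (Stream' A → C) → T A (B × (Stream' A → C))
  | .Ret b, f => .Ret (b, f)
  | .Rd φ, f => .Rd fun a => rho (φ a) fun α => f (Stream'.cons a α)

/-- `rep∞ = unfold (ρ ∘ τ)` where `τ f = (rep (head ∘ f), tail ∘ f)`. -/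
def repInf {A B : Type u} (rep : (Stream' A → B) → T A B) :
    (Stream' A → Stream' B) → P A B :=
  Punfold fun f => rho (rep fun α => (f α).head) fun α => (f α).tail

/-- the carrier of the composition coalgebras. -/
def S' (A B C : Type u) : Type u := T B (C × P B C) × T A (B × P A B)

/-- the `lazy' composition coalgebra `χ`, as a nested structural recursion
(outer fold on the postponent, inner fold on the preponent). -/
def chi {A B C : Type u} : T B (C × P B C) → T A (B × P A B) → T A (C × S' A B C) :=
  tfold
    (fun cp u => .Ret (cp.1, (Pout cp.2, u)))
    (fun f => tfold (fun bq => f bq.1 (Pout bq.2)) .Rd)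

/-- the `greedy' composition coalgebra `χ'`. -/
def chi' {A B C : Type u} : T B (C × P B C) → T A (B × P A B) → T A (C × S' A B C) :=
  tfold
    (fun cp => tfold (fun bq => .Ret (cp.1, (Pout cp.2, .Ret bq))) .Rd)
    (fun f => tfold (fun bq => f bq.1 (Pout bq.2)) .Rd)

/-- lazy composition on representatives (tree level). -/
def otimesT {A B C : Type u} (t : T B (C × P B C)) (u : T A (B × P A B)) : P A C :=
  Punfold (fun s : S' A B C => chi s.1 s.2) (t, u)

/-- lazy composition `⊗ : P_B C × P_A B → P_A C`. -/
def otimes {A B C : Type u} (p : P B C) (q : P A B) : P A C :=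
  otimesT (Pout p) (Pout q)

/-- greedy composition on representatives (tree level). -/
def otimesT' {A B C : Type u} (t : T B (C × P B C)) (u : T A (B × P A B)) : P A C :=
  Punfold (fun s : S' A B C => chi' s.1 s.2) (t, u)

/-- greedy composition `⊗' : P_B C × P_A B → P_A C`. -/
def otimes' {A B C : Type u} (p : P B C) (q : P A B) : P A C :=
  otimesT' (Pout p) (Pout q)

end StreamProc

namespace StreamProc

def tmap2 {A B X Y : Type u} (f : X → Y) : T A (B × X) → T A (B × Y) :=
  tfold (fun bx => .Ret (bx.1, f bx.2)) .Rd

theorem decorate_splitT {A B X Y : Type u} (t : T A (B × X)) (g : X → Y) :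
    decorate (splitT t).1 (g ∘ (splitT t).2) = tmap2 g t := by
  induction t with
  | Ret bx => rfl
  | Rd φ ih =>
    simp only [splitT, decorate, tmap2, tfold]
    congr 1
    funext a
    exact ih a

theorem Pout_Punfold {A B X : Type u} (c : X → T A (B × X)) (x : X) :
    Pout (Punfold c x) = tmap2 (Punfold c) (c x) := by
  rw [← decorate_splitT (c x) (Punfold c)]
  show decorate (PFunctor.M.dest (Punfold c x)).1 (PFunctor.M.dest (Punfold c x)).2 = _
  rw [show PFunctor.M.dest (Punfold c x)
      = ⟨(splitT (c x)).1, Punfold c ∘ (splitT (c x)).2⟩ from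
    PFunctor.M.dest_corec _ x]
  rfl

theorem Pout_inj {A B : Type u} {p q : P A B}
    (h : (PFunctor.M.dest p : (PF A B) (P A B)) = PFunctor.M.dest q) : p = q := by
  rw [← PFunctor.M.mk_dest p, ← PFunctor.M.mk_dest q, h]

/-- Lazy composition `⊗` satisfies the equations of Lemma 4.1 (identifying
`P_A C` with its unfolding via `out`). -/
theorem stmt15 {A B C : Type u} :
    (∀ (c : C) (pbc : P B C) (t : T A (B × P A B)),
      Pout (otimesT (.Ret (c, pbc)) t) = .Ret (c, otimesT (Pout pbc) t)) ∧
    (∀ (φ : B → T B (C × P B C)) (b : B) (pab : P A B),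
      otimesT (A := A) (.Rd φ) (.Ret (b, pab)) = otimesT (φ b) (Pout pab)) ∧
    (∀ (φ : B → T B (C × P B C)) (ψ : A → T A (B × P A B)),
      Pout (otimesT (.Rd φ) (.Rd ψ)) =
        .Rd fun a => Pout (otimesT (.Rd φ) (ψ a))) := by
  refine ⟨?_, ?_, ?_⟩
  · intro c pbc t
    exact Pout_Punfold (fun s : S' A B C => chi s.1 s.2) (T.Ret (c, pbc), t)
  · intro φ b pab
    apply Pout_inj
    show PFunctor.M.dest (PFunctor.M.corec _ _) = PFunctor.M.dest (PFunctor.M.corec _ _)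
    exact (PFunctor.M.dest_corec _ _).trans (PFunctor.M.dest_corec _ _).symm
  · intro φ ψ
    have h := Pout_Punfold (fun s : S' A B C => chi s.1 s.2) (T.Rd φ, T.Rd ψ)
    show Pout (Punfold (fun s : S' A B C => chi s.1 s.2) (T.Rd φ, T.Rd ψ)) = _
    rw [h]
    show tmap2 _ (T.Rd fun a => chi (T.Rd φ) (ψ a)) = _
    simp only [tmap2, tfold]
    congr 1
    funext a
    exact (Pout_Punfold (fun s : S' A B C => chi s.1 s.2) (T.Rd φ, ψ a)).symm


end StreamProc
end

section
/- Correctness of lazy composition: for all p : P_B C, q : P_A B, and α : A^ω, eat∞ (p ⊗ q) α = eat∞ p (eat∞ q α); hence eat∞ (p ⊗ q) = eat∞ p ∘ eat∞ q. -/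
universe u

namespace StreamProc

section Aux

/-- one-step tree semantics followed by `eatInf`. -/
def eatInfT {A B : Type u} (t : T A (B × P A B)) (α : Stream' A) : Stream' B :=
  Stream'.cons (eat t α).1.1 (eatInf (eat t α).1.2 (eat t α).2)

theorem eatInf_eq {A B : Type u} (p : P A B) (α : Stream' A) :
    eatInf p α = eatInfT (Pout p) α := by
  unfold eatInf eatInfT
  exact Stream'.corec_eq _ _ _

theorem eatInfT_Rd {A B : Type u} (ψ : A → T A (B × P A B)) (α : Stream' A) :
    eatInfT (.Rd ψ) α = eatInfT (ψ α.head) α.tail := rfl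

theorem eat_decorate {A B X C' : Type u} (g : X → C') :
    ∀ (t : T A (B × X)) (α : Stream' A),
      eat (decorate (splitT t).1 (fun l => g ((splitT t).2 l))) α =
        (((eat t α).1.1, g (eat t α).1.2), (eat t α).2)
  | .Ret bx, α => rfl
  | .Rd φ, α => by
      show eat (decorate (splitT (φ α.head)).1
        (fun l => g ((splitT (φ α.head)).2 l))) α.tail = _
      exact eat_decorate g (φ α.head) α.tail

theorem eat_Pout_Punfold {A B X : Type u} (c : X → T A (B × X)) (x : X)
    (α : Stream' A) :
    eat (Pout (Punfold c x)) α =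
      (((eat (c x) α).1.1, Punfold c (eat (c x) α).1.2), (eat (c x) α).2) := by
  have h : Pout (Punfold c x) =
      decorate (splitT (c x)).1 (fun l => Punfold c ((splitT (c x)).2 l)) := by
    unfold Pout Punfold
    rw [PFunctor.M.dest_corec (P := PF A B) (fun x => splitT (c x)) x]
    rfl
  rw [h, eat_decorate]

/-- key computation: `eat` of `chi t u` simulates running `t` on the output of `u`. -/
theorem chi_eat {A B C : Type u} (t : T B (C × P B C)) :
    ∀ (u : T A (B × P A B)) (α : Stream' A),
      ∃ u' α', eatInfT u' α' = (eat t (eatInfT u α)).2 ∧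
        eat (chi t u) α =
          (((eat t (eatInfT u α)).1.1,
            (Pout (eat t (eatInfT u α)).1.2, u')), α') := by
  induction t with
  | Ret cp => exact fun u α => ⟨u, α, rfl, rfl⟩
  | Rd φ ih =>
    intro u
    induction u with
    | Ret bq =>
      intro α
      have h1 : chi (.Rd φ) (.Ret bq) = chi (φ bq.1) (Pout bq.2) := rfl
      have h2 : eat (.Rd φ) (eatInfT (.Ret bq) α)
          = eat (φ bq.1) (eatInfT (Pout bq.2) α) := by
        show eat (φ (Stream'.cons bq.1 _).head) (Stream'.cons bq.1 _).tail = _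
        rw [Stream'.head_cons, Stream'.tail_cons, eatInf_eq]
        rfl
      rw [h1, h2]
      exact ih bq.1 (Pout bq.2) α
    | Rd ψ ih2 =>
      intro α
      have h2 : eat (chi (.Rd φ) (.Rd ψ)) α
          = eat (chi (.Rd φ) (ψ α.head)) α.tail := rfl
      rw [h2, eatInfT_Rd]
      exact ih2 α.head α.tail

theorem eatInf_otimesT {A B C : Type u} (t : T B (C × P B C))
    (u : T A (B × P A B)) (α : Stream' A) :
    eatInf (otimesT t u) α = eatInfT t (eatInfT u α) := by
  apply Stream'.eq_of_bisim
    (fun x y => ∃ (t : T B (C × P B C)) (u : T A (B × P A B)) (α : Stream' A),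
      x = eatInf (otimesT t u) α ∧ y = eatInfT t (eatInfT u α))
  · rintro x y ⟨t, u, α, rfl, rfl⟩
    obtain ⟨u', α', h1, h2⟩ := chi_eat t u α
    have hx : eatInf (otimesT t u) α
        = Stream'.cons (eat t (eatInfT u α)).1.1
            (eatInf (otimesT (Pout (eat t (eatInfT u α)).1.2) u') α') := by
      rw [eatInf_eq]
      unfold eatInfT
      have := eat_Pout_Punfold (fun s : S' A B C => chi s.1 s.2) (t, u) α
      unfold otimesT
      rw [this, h2]
      rfl
    have hy : eatInfT t (eatInfT u α)
        = Stream'.cons (eat t (eatInfT u α)).1.1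
            (eatInfT (Pout (eat t (eatInfT u α)).1.2) (eatInfT u' α')) := by
      have e : eatInfT t (eatInfT u α)
          = Stream'.cons (eat t (eatInfT u α)).1.1
              (eatInf (eat t (eatInfT u α)).1.2 (eat t (eatInfT u α)).2) := rfl
      rw [e, ← h1, eatInf_eq]
    rw [hx, hy]
    refine ⟨rfl, Pout (eat t (eatInfT u α)).1.2, u', α', ?_, ?_⟩
    · rw [Stream'.tail_cons]
    · rw [Stream'.tail_cons]
  · exact ⟨t, u, α, rfl, rfl⟩

end Aux

/-- Correctness of lazy composition: `eat∞ (p ⊗ q) = eat∞ p ∘ eat∞ q`. -/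
theorem stmt17 {A B C : Type u} (p : P B C) (q : P A B) :
    (∀ α, eatInf (otimes p q) α = eatInf p (eatInf q α)) ∧
    eatInf (otimes p q) = eatInf p ∘ eatInf q := by
  have h : ∀ α, eatInf (otimes p q) α = eatInf p (eatInf q α) := by
    intro α
    unfold otimes
    rw [eatInf_otimesT, eatInf_eq q, ← eatInf_eq p]
  exact ⟨h, funext fun α => by rw [h α]; rfl⟩

end StreamProc
end
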